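/- Let abundances (n_s)_{s=1..S} be i.i.d. zero-truncated negative binomial with parameters r, ξ, and let each individual be sampled independently with probability p. Define S^new_{1-p} = Σ_s 1{n_s^p = 0}, the number of species entirely missed by the sample. Then E[S^new_{1-p}] = S·(1 - c(r,ξ)/c(r,ξ_p)), where c(r,x) = 1/(1-(1-x)^r) and ξ_p = pξ/(1-ξ(1-p)). -/

import Mathlib

open MeasureTheory

/-- Generalized negative binomial coefficient C(n+r-1, n) = Γ(n+r)/(Γ(n+1)Γ(r)). -/
noncomputable def nbCoef (r : ℝ) (n : ℕ) : ℝ :=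
  Real.Gamma (n + r) / (Real.Gamma (n + 1) * Real.Gamma r)

section Aux
open Real Set

lemma nbCoef_pos {r : ℝ} (hr : 0 < r) (n : ℕ) : 0 < nbCoef r n := by
  unfold nbCoef
  have h1 : 0 < Real.Gamma (n + r) := Real.Gamma_pos_of_pos (by positivity)
  have h2 : 0 < Real.Gamma (n + 1) := Real.Gamma_pos_of_pos (by positivity)
  have h3 : 0 < Real.Gamma r := Real.Gamma_pos_of_pos hr
  positivity

lemma nbCoef_zero {r : ℝ} (hr : 0 < r) : nbCoef r 0 = 1 := by
  have h3 : Real.Gamma r ≠ 0 := (Real.Gamma_pos_of_pos hr).ne'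
  simp [nbCoef, Real.Gamma_one, div_self h3]

lemma nbCoef_succ {r : ℝ} (hr : 0 < r) (n : ℕ) :
    nbCoef r (n + 1) = nbCoef r n * ((n + r) / (n + 1)) := by
  unfold nbCoef
  have hnr : ((n:ℝ) + r) ≠ 0 := by positivity
  have hn1 : ((n:ℝ) + 1) ≠ 0 := by positivity
  have e1 : ((n + 1 : ℕ) : ℝ) + r = ((n:ℝ) + r) + 1 := by push_cast; ring
  have e2 : ((n + 1 : ℕ) : ℝ) + 1 = ((n:ℝ) + 1) + 1 := by push_cast; ring
  rw [e1, e2, Real.Gamma_add_one hnr, Real.Gamma_add_one hn1]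
  field_simp

lemma summable_nbCoef {r t : ℝ} (hr : 0 < r) (ht0 : 0 < t) (ht1 : t < 1) :
    Summable (fun n => nbCoef r n * t ^ n) := by
  apply summable_of_ratio_test_tendsto_lt_one ht1
  · filter_upwards with n
    have := nbCoef_pos hr n
    positivity
  · have h : (fun n : ℕ => ‖nbCoef r (n+1) * t ^ (n+1)‖ / ‖nbCoef r n * t ^ n‖)
        = fun n : ℕ => t * (1 + (r - 1) * (1 / ((n:ℝ) + 1))) := by
      funext n
      have hc := nbCoef_pos hr n
      have hc' := nbCoef_pos hr (n+1)
      have htn : (0:ℝ) < t ^ n := by positivity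
      rw [Real.norm_of_nonneg (by positivity), Real.norm_of_nonneg (by positivity),
        nbCoef_succ hr n]
      have hn1 : ((n:ℝ) + 1) ≠ 0 := by positivity
      field_simp
      ring
    rw [h]
    have : Filter.Tendsto (fun n : ℕ => t * (1 + (r - 1) * (1 / ((n:ℝ) + 1))))
        Filter.atTop (nhds (t * (1 + (r - 1) * 0))) :=
      Filter.Tendsto.const_mul t (Filter.Tendsto.const_add 1
        (Filter.Tendsto.const_mul (r-1) tendsto_one_div_add_atTop_nhds_zero_nat))
    simpa using this

lemma tsum_nbCoef {r t : ℝ} (hr : 0 < r) (ht0 : 0 < t) (ht1 : t < 1) :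
    ∑' n, nbCoef r n * t ^ n = (1 - t) ^ (-r) := by
  have hΓ : 0 < Real.Gamma r := Real.Gamma_pos_of_pos hr
  set f : ℕ → ℝ → ℝ := fun n x => Real.exp (-x) * x ^ (r - 1) / Real.Gamma r *
    ((t * x) ^ n / (n.factorial : ℝ)) with hf
  have hEq : ∀ n : ℕ, EqOn (fun x => (t ^ n / ((n.factorial : ℝ) * Real.Gamma r)) *
      (Real.exp (-x) * x ^ (((n:ℝ) + r) - 1))) (f n) (Ioi 0) := by
    intro n x hx
    have hx0 : (0:ℝ) < x := hx
    have : x ^ (((n:ℝ) + r) - 1) = x ^ n * x ^ (r - 1) := by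
      rw [show ((n:ℝ) + r) - 1 = (n:ℝ) + (r - 1) by ring, Real.rpow_add hx0,
        Real.rpow_natCast]
    simp only [hf, this, mul_pow]
    field_simp
  have hint : ∀ n : ℕ, IntegrableOn (f n) (Ioi 0) := by
    intro n
    exact MeasureTheory.IntegrableOn.congr_fun
      ((Real.GammaIntegral_convergent (show (0:ℝ) < (n:ℝ) + r by positivity)).const_mul _)
      (hEq n) measurableSet_Ioi
  have hval : ∀ n : ℕ, ∫ x in Ioi 0, f n x = nbCoef r n * t ^ n := by
    intro n
    rw [← setIntegral_congr_fun measurableSet_Ioi (hEq n), integral_const_mul,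
      ← Real.Gamma_eq_integral (show (0:ℝ) < (n:ℝ) + r by positivity)]
    unfold nbCoef
    rw [Real.Gamma_nat_eq_factorial]
    field_simp
  have hnn : ∀ n : ℕ, (0:ℝ) ≤ nbCoef r n * t ^ n := by
    intro n; have := nbCoef_pos hr n; positivity
  have hnnf : ∀ n : ℕ, 0 ≤ᵐ[volume.restrict (Ioi 0)] f n := by
    intro n
    refine (ae_restrict_iff' measurableSet_Ioi).2 (Filter.Eventually.of_forall fun x hx => ?_)
    have hx0 : (0:ℝ) < x := hx
    have h1 : (0:ℝ) ≤ x ^ (r-1) := Real.rpow_nonneg hx0.le _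
    have h2 : (0:ℝ) ≤ (t * x) ^ n := by positivity
    have h3 : (0:ℝ) < Real.exp (-x) := Real.exp_pos _
    simp only [hf]
    positivity
  have hmeas : ∀ n : ℕ, AEStronglyMeasurable (f n) (volume.restrict (Ioi 0)) := by
    intro n; exact (hint n).aestronglyMeasurable
  have hlin : ∀ n : ℕ, ∫⁻ x in Ioi 0, ‖f n x‖₊ = ENNReal.ofReal (nbCoef r n * t ^ n) := by
    intro n
    rw [show ∫⁻ x in Ioi 0, (‖f n x‖₊ : ENNReal) = ∫⁻ x in Ioi 0, ENNReal.ofReal (f n x) from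
      lintegral_congr_ae ((hnnf n).mono fun x hx => Real.enorm_eq_ofReal hx),
      ← ofReal_integral_eq_lintegral_ofReal (hint n) (hnnf n), hval n]
  have hsum : Summable (fun n => nbCoef r n * t ^ n) := summable_nbCoef hr ht0 ht1
  have htop : ∑' n : ℕ, ∫⁻ x in Ioi 0, ‖f n x‖₊ ≠ ⊤ := by
    simp_rw [hlin]
    rw [← ENNReal.ofReal_tsum_of_nonneg hnn hsum]
    exact ENNReal.ofReal_ne_top
  have hswap : ∫ x in Ioi 0, (∑' n : ℕ, f n x) = ∑' n : ℕ, ∫ x in Ioi 0, f n x :=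
    integral_tsum hmeas htop
  have hpt : ∀ x : ℝ, (∑' n : ℕ, f n x) =
      Real.exp (-x) * x ^ (r - 1) / Real.Gamma r * Real.exp (t * x) := by
    intro x
    rw [hf, tsum_mul_left, Real.exp_eq_exp_ℝ, NormedSpace.exp_eq_tsum_div]
  have hfin : ∫ x in Ioi 0, (∑' n : ℕ, f n x) = (1 - t) ^ (-r) := by
    have hb : (0:ℝ) < 1 - t := by linarith
    have e1 : EqOn (fun x : ℝ => (Real.Gamma r)⁻¹ * (x ^ (r-1) * Real.exp (-(1-t) * x ^ (1:ℝ))))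
        (fun x => ∑' n : ℕ, f n x) (Ioi 0) := by
      intro x hx
      have hx0 : (0:ℝ) < x := hx
      simp only [hpt x, Real.rpow_one]
      rw [show -(1 - t) * x = -x + t * x by ring, Real.exp_add]
      ring
    rw [← setIntegral_congr_fun measurableSet_Ioi e1, integral_const_mul,
      integral_rpow_mul_exp_neg_mul_rpow one_pos (by linarith : (-1:ℝ) < r - 1) hb]
    rw [show r - 1 + 1 = r by ring]
    rw [show -r / 1 = -r by ring, show r / 1 = r by ring]
    field_simp

  calc ∑' n, nbCoef r n * t ^ n = ∑' n : ℕ, ∫ x in Ioi 0, f n x := by simp_rw [hval]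
    _ = (1 - t) ^ (-r) := by rw [← hswap, hfin]

lemma summable_nbCoef_ite {r t : ℝ} (hr : 0 < r) (ht0 : 0 < t) (ht1 : t < 1) :
    Summable (fun n : ℕ => if 1 ≤ n then nbCoef r n * t ^ n else 0) := by
  have hs := summable_nbCoef hr ht0 ht1
  have hsh : Summable (fun n : ℕ => nbCoef r (n + 1) * t ^ (n + 1)) :=
    (summable_nat_add_iff 1).2 hs
  refine (summable_nat_add_iff 1).1 ?_
  refine hsh.congr fun n => ?_
  simp [Nat.succ_le_succ]

lemma tsum_nbCoef_ite {r t : ℝ} (hr : 0 < r) (ht0 : 0 < t) (ht1 : t < 1) :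
    ∑' n : ℕ, (if 1 ≤ n then nbCoef r n * t ^ n else 0) = (1 - t) ^ (-r) - 1 := by
  have hs := summable_nbCoef hr ht0 ht1
  have hg := summable_nbCoef_ite hr ht0 ht1
  have e1 := Summable.tsum_eq_zero_add hg
  have e2 := Summable.tsum_eq_zero_add hs
  rw [tsum_nbCoef hr ht0 ht1] at e2
  have e3 : ∑' n : ℕ, (if 1 ≤ n + 1 then nbCoef r (n + 1) * t ^ (n + 1) else 0)
      = ∑' n : ℕ, nbCoef r (n + 1) * t ^ (n + 1) := by
    apply tsum_congr; intro n; simp [Nat.succ_le_succ]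
  rw [e3] at e1
  rw [e1]
  simp only [nbCoef_zero hr, pow_zero, mul_one] at e2 ⊢
  norm_num
  linarith

end Aux

/-- Expected number of species missed by the sample:
E[Σ_s 1{n_s^p = 0}] = S·(1 - c(r,ξ)/c(r,ξ_p)), where c(r,x) = 1/(1-(1-x)^r)
and ξ_p = pξ/(1-ξ(1-p)). -/
theorem stmt14 {Ω : Type*} [MeasurableSpace Ω] (μ : Measure Ω)
    [IsProbabilityMeasure μ] (r ξ p : ℝ) (hr : 0 < r)
    (hξ : ξ ∈ Set.Ioo (0:ℝ) 1) (hp : p ∈ Set.Ioo (0:ℝ) 1)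
    (S : ℕ) (N Np : Fin S → Ω → ℕ) (hle : ∀ s ω, Np s ω ≤ N s ω)
    (hjoint : ∀ s, ∀ n k : ℕ, k ≤ n →
      μ {ω | N s ω = n ∧ Np s ω = k} =
        ENNReal.ofReal ((n.choose k : ℝ) * p ^ k * (1 - p) ^ (n - k) *
          (if 1 ≤ n then (1 - (1 - ξ) ^ r)⁻¹ * nbCoef r n * ξ ^ n * (1 - ξ) ^ r
           else 0))) :
    ∫ ω, ((Finset.univ.filter fun s : Fin S => Np s ω = 0).card : ℝ) ∂μ =
      S * (1 - (1 - (1 - ξ) ^ r)⁻¹ /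
        (1 - (1 - p * ξ / (1 - ξ * (1 - p))) ^ r)⁻¹) := by
  obtain ⟨hξ0, hξ1⟩ := hξ
  obtain ⟨hp0, hp1⟩ := hp
  -- basic positivity facts
  set u : ℝ := (1 - ξ) ^ r with hu_def
  have h1ξ : (0:ℝ) < 1 - ξ := by linarith
  have hu0 : 0 < u := Real.rpow_pos_of_pos h1ξ r
  have hu1 : u < 1 := Real.rpow_lt_one h1ξ.le (by linarith) hr
  have hcu : (0:ℝ) < 1 - u := by linarith
  set q : ℝ := ξ * (1 - p) with hq_def
  have hq0 : 0 < q := by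
    have h1p : (0:ℝ) < 1 - p := by linarith
    rw [hq_def]; positivity
  have hq1 : q < 1 := by nlinarith
  have h1q : (0:ℝ) < 1 - q := by linarith
  set v : ℝ := (1 - q) ^ (-r) with hv_def
  have hv1 : 1 < v := by
    rw [hv_def]
    rw [Real.one_lt_rpow_iff_of_pos h1q]
    right
    constructor
    · nlinarith
    · linarith
  -- the pmf
  set G : ℕ → ℝ := fun n =>
    if 1 ≤ n then (1 - (1 - ξ) ^ r)⁻¹ * nbCoef r n * ξ ^ n * (1 - ξ) ^ r else 0 with hG_def
  have hG_eq : ∀ n, G n = ((1 - u)⁻¹ * u) * (if 1 ≤ n then nbCoef r n * ξ ^ n else 0) := by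
    intro n
    simp only [hG_def, ← hu_def]
    split <;> ring
  have hG_nonneg : ∀ n, 0 ≤ G n := by
    intro n
    rw [hG_eq]
    rcases le_or_gt 1 n with h | h
    · have := (nbCoef_pos hr n).le
      rw [if_pos h]; positivity
    · rw [if_neg (by omega)]; ring_nf; exact le_refl 0
  have hG_summable : Summable G := by
    refine Summable.congr (((summable_nbCoef_ite hr hξ0 hξ1).mul_left _)) fun n => (hG_eq n).symm
  have hG_tsum : ∑' n, G n = 1 := by
    calc ∑' n, G n = ((1 - u)⁻¹ * u) * ∑' n, (if 1 ≤ n then nbCoef r n * ξ ^ n else 0) := by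
          rw [← tsum_mul_left]; exact tsum_congr fun n => hG_eq n
      _ = ((1 - u)⁻¹ * u) * ((1 - ξ) ^ (-r) - 1) := by rw [tsum_nbCoef_ite hr hξ0 hξ1]
      _ = 1 := by
          have hinv : u * (1 - ξ) ^ (-r) = 1 := by
            rw [hu_def, Real.rpow_neg h1ξ.le, mul_inv_cancel₀ (Real.rpow_pos_of_pos h1ξ r).ne']
          field_simp
          nlinarith [hinv]
  -- T0 and T1
  set T0f : ℕ → ℝ := fun n => (1 - p) ^ n * G n with hT0f_def
  set T1f : ℕ → ℝ := fun n => G n - T0f n with hT1f_def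
  have hT0f_eq : ∀ n, T0f n = ((1 - u)⁻¹ * u) * (if 1 ≤ n then nbCoef r n * q ^ n else 0) := by
    intro n
    simp only [hT0f_def, hG_eq n, hq_def]
    rw [mul_pow]
    split <;> ring
  have hT0f_nonneg : ∀ n, 0 ≤ T0f n := by
    intro n
    have := hG_nonneg n
    have h1p : (0:ℝ) ≤ 1 - p := by linarith
    simp only [hT0f_def]
    positivity
  have hT1f_nonneg : ∀ n, 0 ≤ T1f n := by
    intro n
    simp only [hT1f_def, hT0f_def, sub_nonneg]
    have h1 : (1 - p) ^ n ≤ 1 :=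
      pow_le_one₀ (by linarith) (by linarith)
    nlinarith [hG_nonneg n, h1]
  have hT0_summable : Summable T0f :=
    Summable.congr ((summable_nbCoef_ite hr hq0 hq1).mul_left _) fun n => (hT0f_eq n).symm
  have hT1_summable : Summable T1f := hG_summable.sub hT0_summable
  set T0 : ℝ := ((1 - u)⁻¹ * u) * (v - 1) with hT0_def
  have hT0_nonneg : 0 ≤ T0 := by
    rw [hT0_def]
    have : (0:ℝ) ≤ v - 1 := by linarith
    positivity
  have hT0_tsum : ∑' n, T0f n = T0 := by
    calc ∑' n, T0f n = ((1 - u)⁻¹ * u) * ∑' n, (if 1 ≤ n then nbCoef r n * q ^ n else 0) := by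
          rw [← tsum_mul_left]; exact tsum_congr fun n => hT0f_eq n
      _ = T0 := by rw [tsum_nbCoef_ite hr hq0 hq1, hT0_def, hv_def]
  have hT1_tsum : ∑' n, T1f n = 1 - T0 := by
    simp only [hT1f_def]
    rw [Summable.tsum_sub hG_summable hT0_summable, hG_tsum, hT0_tsum]
  -- measure computation per species
  have key : ∀ s : Fin S, μ {ω | Np s ω = 0} = ENNReal.ofReal T0 ∧
      NullMeasurableSet {ω | Np s ω = 0} μ := by
    intro s
    set A : Set Ω := {ω | Np s ω = 0} with hA_def
    have hjointG : ∀ n k : ℕ, k ≤ n → μ {ω | N s ω = n ∧ Np s ω = k} =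
        ENNReal.ofReal ((n.choose k : ℝ) * p ^ k * (1 - p) ^ (n - k) * G n) := hjoint s
    -- upper bound for μ A
    have hA_le : μ A ≤ ∑' n : ℕ, ENNReal.ofReal (T0f n) := by
      have hsub : A ⊆ ⋃ n : ℕ, {ω | N s ω = n ∧ Np s ω = 0} := by
        intro ω hω
        exact Set.mem_iUnion.2 ⟨N s ω, rfl, hω⟩
      refine (measure_mono hsub).trans ((measure_iUnion_le _).trans ?_)
      refine le_of_eq (tsum_congr fun n => ?_)
      rw [hjointG n 0 (Nat.zero_le n)]
      congr 1
      simp [hT0f_def]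
    -- upper bound for μ Aᶜ
    have hAc_le : μ Aᶜ ≤ ∑' n : ℕ, ENNReal.ofReal (T1f n) := by
      have hsub : Aᶜ ⊆ ⋃ n : ℕ, {ω | N s ω = n ∧ Np s ω ≠ 0} := by
        intro ω hω
        exact Set.mem_iUnion.2 ⟨N s ω, rfl, hω⟩
      refine (measure_mono hsub).trans ((measure_iUnion_le _).trans ?_)
      refine ENNReal.tsum_le_tsum fun n => ?_
      have hsub2 : {ω | N s ω = n ∧ Np s ω ≠ 0} ⊆
          ⋃ k ∈ (Finset.range (n+1)).erase 0, {ω | N s ω = n ∧ Np s ω = k} := by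
        intro ω ⟨h1, h2⟩
        refine Set.mem_iUnion₂.2 ⟨Np s ω, ?_, h1, rfl⟩
        refine Finset.mem_erase.2 ⟨h2, Finset.mem_range.2 ?_⟩
        have := hle s ω
        omega
      refine (measure_mono hsub2).trans ((measure_biUnion_finset_le _ _).trans ?_)
      have hsum_eq : ∀ k ∈ (Finset.range (n+1)).erase 0,
          μ {ω | N s ω = n ∧ Np s ω = k} =
          ENNReal.ofReal ((n.choose k : ℝ) * p ^ k * (1 - p) ^ (n - k) * G n) := by
        intro k hk
        rw [Finset.mem_erase, Finset.mem_range] at hk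
        exact hjointG n k (by omega)
      rw [Finset.sum_congr rfl hsum_eq, ← ENNReal.ofReal_sum_of_nonneg]
      · apply ENNReal.ofReal_le_ofReal
        have hbinom : ∑ k ∈ Finset.range (n+1),
            ((n.choose k : ℝ) * p ^ k * (1 - p) ^ (n - k)) = 1 := by
          have h0 := add_pow p (1 - p) n
          rw [show p + (1 - p) = (1:ℝ) by ring, one_pow] at h0
          calc ∑ k ∈ Finset.range (n+1), ((n.choose k : ℝ) * p ^ k * (1 - p) ^ (n - k))
              = ∑ k ∈ Finset.range (n+1), (p ^ k * (1 - p) ^ (n - k) * (n.choose k : ℝ)) :=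
                Finset.sum_congr rfl fun k _ => by ring
            _ = 1 := h0.symm
        have h0mem : (0 : ℕ) ∈ Finset.range (n+1) := Finset.mem_range.2 (by omega)
        have herase := Finset.sum_erase_add (Finset.range (n+1))
          (fun k => (n.choose k : ℝ) * p ^ k * (1 - p) ^ (n - k) * G n) h0mem
        have hfull : ∑ k ∈ Finset.range (n+1),
            ((n.choose k : ℝ) * p ^ k * (1 - p) ^ (n - k) * G n) = G n := by
          rw [← Finset.sum_mul, hbinom, one_mul]
        have h0val : ((n.choose 0 : ℝ) * p ^ 0 * (1 - p) ^ (n - 0) * G n)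
            = (1 - p) ^ n * G n := by norm_num
        simp only [hT1f_def, hT0f_def]
        linarith [herase, hfull, h0val]
      · intro k hk
        rw [Finset.mem_erase, Finset.mem_range] at hk
        have h1p : (0:ℝ) ≤ 1 - p := by linarith
        have := hG_nonneg n
        positivity
    -- total
    have hT01 : (∑' n : ℕ, ENNReal.ofReal (T0f n)) + (∑' n : ℕ, ENNReal.ofReal (T1f n)) = 1 := by
      rw [← ENNReal.tsum_add]
      have : ∀ n : ℕ, ENNReal.ofReal (T0f n) + ENNReal.ofReal (T1f n) = ENNReal.ofReal (G n) := by
        intro n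
        rw [← ENNReal.ofReal_add (hT0f_nonneg n) (hT1f_nonneg n)]
        congr 1
        simp [hT1f_def]
      rw [tsum_congr this, ← ENNReal.ofReal_tsum_of_nonneg hG_nonneg hG_summable, hG_tsum,
        ENNReal.ofReal_one]
    have hT1top : (∑' n : ℕ, ENNReal.ofReal (T1f n)) ≠ ⊤ := by
      intro h
      rw [h] at hT01
      simp at hT01
    have hT0top : (∑' n : ℕ, ENNReal.ofReal (T0f n)) ≠ ⊤ := by
      intro h
      rw [h] at hT01
      simp at hT01
    have hunion : (1 : ENNReal) ≤ μ A + μ Aᶜ := by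
      have := measure_union_le (μ := μ) A Aᶜ
      rw [Set.union_compl_self, measure_univ] at this
      exact this
    have hμA : μ A = ∑' n : ℕ, ENNReal.ofReal (T0f n) := by
      by_contra h
      have hlt : μ A < ∑' n : ℕ, ENNReal.ofReal (T0f n) := lt_of_le_of_ne hA_le h
      have : μ A + μ Aᶜ < (∑' n : ℕ, ENNReal.ofReal (T0f n)) +
          (∑' n : ℕ, ENNReal.ofReal (T1f n)) :=
        lt_of_le_of_lt (add_le_add_right hAc_le _) (ENNReal.add_lt_add_right hT1top hlt)
      rw [hT01] at this
      exact absurd hunion (not_le.2 this)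
    have hμAc : μ Aᶜ = ∑' n : ℕ, ENNReal.ofReal (T1f n) := by
      by_contra h
      have hlt : μ Aᶜ < ∑' n : ℕ, ENNReal.ofReal (T1f n) := lt_of_le_of_ne hAc_le h
      have : μ A + μ Aᶜ < (∑' n : ℕ, ENNReal.ofReal (T0f n)) +
          (∑' n : ℕ, ENNReal.ofReal (T1f n)) :=
        lt_of_le_of_lt (add_le_add_left hA_le _) (ENNReal.add_lt_add_left hT0top hlt)
      rw [hT01] at this
      exact absurd hunion (not_le.2 this)
    have hval : μ A = ENNReal.ofReal T0 := by
      rw [hμA, ← ENNReal.ofReal_tsum_of_nonneg hT0f_nonneg hT0_summable, hT0_tsum]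
    -- null measurability
    refine ⟨hval, ?_⟩
    set B := toMeasurable μ A with hB_def
    set C := toMeasurable μ Aᶜ with hC_def
    have hAB : A ⊆ B := subset_toMeasurable μ A
    have hAcC : Aᶜ ⊆ C := subset_toMeasurable μ Aᶜ
    have hBmeas : MeasurableSet B := measurableSet_toMeasurable μ A
    have hCmeas : MeasurableSet C := measurableSet_toMeasurable μ Aᶜ
    have hBC_univ : B ∪ C = Set.univ := by
      apply Set.eq_univ_of_univ_subset
      rw [← Set.union_compl_self A]
      exact Set.union_subset_union hAB hAcC
    have hsum_eq : μ B + μ C = 1 := by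
      rw [measure_toMeasurable, measure_toMeasurable, hμA, hμAc, hT01]
    have hinter : μ (B ∩ C) = 0 := by
      have h := measure_union_add_inter (μ := μ) B hCmeas
      rw [hBC_univ, measure_univ, hsum_eq] at h
      have h1 : (1 : ENNReal) + μ (B ∩ C) = 1 + 0 := by rw [h, add_zero]
      exact (ENNReal.add_right_inj ENNReal.one_ne_top).1 h1
    have hdiff : μ (B \ A) = 0 := by
      refine measure_mono_null ?_ hinter
      intro x ⟨hxB, hxA⟩
      exact ⟨hxB, hAcC hxA⟩
    have hAeqB : A =ᵐ[μ] B := by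
      rw [MeasureTheory.ae_eq_set]
      constructor
      · rw [Set.diff_eq_empty.2 hAB]
        exact measure_empty
      · exact hdiff
    exact NullMeasurableSet.congr hBmeas.nullMeasurableSet hAeqB.symm
  -- per-species integral
  have hind : ∀ s : Fin S,
      Integrable (fun ω => ({ω' | Np s ω' = 0}).indicator (fun _ => (1:ℝ)) ω) μ ∧
      ∫ ω, ({ω' | Np s ω' = 0}).indicator (fun _ => (1:ℝ)) ω ∂μ = T0 := by
    intro s
    obtain ⟨hval, hnull⟩ := key s
    set A : Set Ω := {ω' | Np s ω' = 0} with hA_def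
    set B := toMeasurable μ A with hB_def
    have hAB : A =ᵐ[μ] B := (NullMeasurableSet.toMeasurable_ae_eq hnull).symm
    have hBmeas : MeasurableSet B := measurableSet_toMeasurable μ A
    have hindAB : A.indicator (fun _ => (1:ℝ)) =ᵐ[μ] B.indicator (fun _ => (1:ℝ)) :=
      indicator_ae_eq_of_ae_eq_set hAB
    have hintB : Integrable (B.indicator (fun _ => (1:ℝ))) μ := by
      rw [integrable_indicator_iff hBmeas]
      exact integrableOn_const (measure_ne_top μ B)
    constructor
    · exact hintB.congr hindAB.symm
    · rw [integral_congr_ae hindAB, integral_indicator_const _ hBmeas,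
        measureReal_def, measure_toMeasurable, hval, smul_eq_mul, mul_one,
        ENNReal.toReal_ofReal hT0_nonneg]
  -- assemble
  have hcard : ∀ ω, ((Finset.univ.filter fun s : Fin S => Np s ω = 0).card : ℝ) =
      ∑ s : Fin S, ({ω' | Np s ω' = 0}).indicator (fun _ => (1:ℝ)) ω := by
    intro ω
    rw [Finset.card_filter]
    push_cast
    refine Finset.sum_congr rfl fun s _ => ?_
    rw [Set.indicator_apply]
    simp [Set.mem_setOf_eq]
  calc ∫ ω, ((Finset.univ.filter fun s : Fin S => Np s ω = 0).card : ℝ) ∂μ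
      = ∫ ω, ∑ s : Fin S, ({ω' | Np s ω' = 0}).indicator (fun _ => (1:ℝ)) ω ∂μ := by
        exact integral_congr_ae (Filter.Eventually.of_forall fun ω => hcard ω)
    _ = ∑ s : Fin S, ∫ ω, ({ω' | Np s ω' = 0}).indicator (fun _ => (1:ℝ)) ω ∂μ :=
        integral_finset_sum _ fun s _ => (hind s).1
    _ = ∑ s : Fin S, T0 := Finset.sum_congr rfl fun s _ => (hind s).2
    _ = S * T0 := by rw [Finset.sum_const, Finset.card_univ, Fintype.card_fin, nsmul_eq_mul]
    _ = S * (1 - (1 - (1 - ξ) ^ r)⁻¹ /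
        (1 - (1 - p * ξ / (1 - ξ * (1 - p))) ^ r)⁻¹) := by
        congr 1
        have hdiv : ((1 - ξ) / (1 - q)) ^ r = u * v := by
          rw [Real.div_rpow h1ξ.le h1q.le, hv_def, Real.rpow_neg h1q.le, hu_def]
          ring
        have hw : (1 - p * ξ / (1 - ξ * (1 - p))) ^ r = u * v := by
          have h1 : 1 - p * ξ / (1 - ξ * (1 - p)) = (1 - ξ) / (1 - q) := by
            rw [hq_def]
            have hd : (1:ℝ) - ξ * (1 - p) ≠ 0 := by rw [← hq_def]; exact h1q.ne'
            field_simp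
            ring
          rw [h1, hdiv]
        have huv1 : u * v < 1 := by
          have hlt : (1 - ξ) / (1 - q) < 1 := by
            rw [div_lt_one h1q]
            nlinarith
          rw [← hdiv]
          exact Real.rpow_lt_one (by positivity) hlt hr
        have huv0 : 0 < u * v := by
          have hv0 : 0 < v := by linarith
          positivity
        rw [hw, hT0_def]
        have h1 : (1 : ℝ) - u ≠ 0 := hcu.ne'
        have h2 : (1 : ℝ) - u * v ≠ 0 := by nlinarith
        have h1' : (1 : ℝ) - (1 - ξ) ^ r ≠ 0 := h1
        field_simp
        ring
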